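/- Under the Case-C2 setup, every path from s_2 to d_1 contains both v_2 and v_1. -/

import Mathlib

open List

/-- `IsPath E p u w` : the nonempty list `p` of vertices is a directed path
from `u` to `w` with respect to the edge relation `E`. -/
def IsPath {V : Type*} (E : V → V → Prop) (p : List V) (u w : V) : Prop :=
  p ≠ [] ∧ p.head? = some u ∧ p.getLast? = some w ∧ p.Chain' E

/-- `Reaches E u w` (written `u ~> w`) : there is a directed path from `u` to `w`. -/
def Reaches {V : Type*} (E : V → V → Prop) (u w : V) : Prop :=
  ∃ p, IsPath E p u w

/-- A two-unicast layered network: a finite directed graph, with two sources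
`s1, s2` and two destinations `d1, d2` (all four distinct), vertices partitioned
into layers `1, ..., r` such that every edge goes from a layer to the next one,
the first layer is `{s1, s2}`, the last layer is `{d1, d2}`, and each source
reaches its corresponding destination. -/
structure TwoUnicastNetwork (V : Type*) [Fintype V] where
  E : V → V → Prop
  s1 : V
  s2 : V
  d1 : V
  d2 : V
  r : ℕ
  layer : V → ℕ
  layer_pos : ∀ v, 1 ≤ layer v
  layer_le : ∀ v, layer v ≤ r
  edge_layer : ∀ u w, E u w → layer w = layer u + 1
  s_ne : s1 ≠ s2
  d_ne : d1 ≠ d2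
  sd_ne : ∀ s d, (s = s1 ∨ s = s2) → (d = d1 ∨ d = d2) → s ≠ d
  first_layer : ∀ v, layer v = 1 ↔ v = s1 ∨ v = s2
  last_layer : ∀ v, layer v = r ↔ v = d1 ∨ v = d2
  conn1 : Reaches E s1 d1
  conn2 : Reaches E s2 d2

/-- `InterferesOn N S Ri srcOther v` : within the induced subgraph `G[S]`, the
node `v` causes interference on the path `Ri` : `v ∈ S`, `v ∉ Ri`, there is an
edge (inside `G[S]`) from `v` into a node of `Ri`, and there is a path from the
other source `srcOther` to `v` lying inside `G[S]` and disjoint from `Ri`. -/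
def InterferesOn {V : Type*} [Fintype V] (N : TwoUnicastNetwork V) (S : Set V)
    (Ri : List V) (srcOther : V) (v : V) : Prop :=
  v ∈ S ∧ v ∉ Ri ∧ (∃ w ∈ Ri, w ∈ S ∧ N.E v w) ∧
    ∃ q, IsPath N.E q srcOther v ∧ (∀ x ∈ q, x ∈ S) ∧ ∀ x ∈ q, x ∉ Ri

/-- `n_i(G[S])` : the number of nodes causing interference on `Ri` within the
induced subgraph `G[S]`, the interfering path coming from `srcOther`. -/
noncomputable def nInterf {V : Type*} [Fintype V] (N : TwoUnicastNetwork V)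
    (S : Set V) (Ri : List V) (srcOther : V) : ℕ :=
  {v | InterferesOn N S Ri srcOther v}.ncard

/-- `n_i^D` : the number of nodes of the other path `Rother` causing (direct)
interference on `Ri` in `G`. -/
noncomputable def nDirect {V : Type*} [Fintype V] (N : TwoUnicastNetwork V)
    (Ri Rother : List V) (srcOther : V) : ℕ :=
  {v | InterferesOn N Set.univ Ri srcOther v ∧ v ∈ Rother}.ncard

/-- The pair `(R1, R2)` (paths `s1 → d1` and `s2 → d2`) has manageable
interference: there is `S ⊇ R1 ∪ R2` with `n_1(G[S]) ≠ 1` and `n_2(G[S]) ≠ 1`. -/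
def Manageable {V : Type*} [Fintype V] (N : TwoUnicastNetwork V)
    (R1 R2 : List V) : Prop :=
  ∃ S : Set V, (∀ x ∈ R1, x ∈ S) ∧ (∀ x ∈ R2, x ∈ S) ∧
    nInterf N S R1 N.s2 ≠ 1 ∧ nInterf N S R2 N.s1 ≠ 1

/-- The pair `(R1, R2)` has `(s1,d1)`-manageable interference. -/
def Manageable1 {V : Type*} [Fintype V] (N : TwoUnicastNetwork V)
    (R1 R2 : List V) : Prop :=
  ∃ S : Set V, (∀ x ∈ R1, x ∈ S) ∧ (∀ x ∈ R2, x ∈ S) ∧ nInterf N S R1 N.s2 ≠ 1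

/-- The pair `(R1, R2)` has `(s2,d2)`-manageable interference. -/
def Manageable2 {V : Type*} [Fintype V] (N : TwoUnicastNetwork V)
    (R1 R2 : List V) : Prop :=
  ∃ S : Set V, (∀ x ∈ R1, x ∈ S) ∧ (∀ x ∈ R2, x ∈ S) ∧ nInterf N S R2 N.s1 ≠ 1

/-- Removal of the vertex `v` disconnects `a` from `b` :
every path from `a` to `b` contains `v`. -/
def CutVert {V : Type*} [Fintype V] (N : TwoUnicastNetwork V) (v a b : V) : Prop :=
  ∀ p, IsPath N.E p a b → v ∈ p



private lemma pred_of_mem {V : Type*} {E : V → V → Prop} :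
    ∀ {l : List V}, l.Chain' E → ∀ x ∈ l, l.head? = some x ∨ ∃ y ∈ l, E y x := by
  intro l
  induction l with
  | nil => simp
  | cons a t ih =>
    intro hc x hx
    rcases List.mem_cons.1 hx with h | h
    · left; simp [h]
    · cases t with
      | nil => simp at h
      | cons b t' =>
        have hab : E a b := (List.isChain_cons_cons.1 hc).1
        have hct : (b :: t').Chain' E := (List.isChain_cons_cons.1 hc).2
        rcases ih hct x h with h2 | ⟨y, hy, hyx⟩
        · right
          refine ⟨a, by simp, ?_⟩
          simp at h2; exact h2 ▸ hab
        · right; exact ⟨y, List.mem_cons_of_mem _ hy, hyx⟩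

private lemma first_hit {V : Type*} {E : V → V → Prop} (T : V → Prop) :
    ∀ (p : List V) (u w : V), IsPath E p u w → T w → ¬ T u →
      ∃ v x, E v x ∧ T x ∧ ¬ T v ∧ v ∈ p ∧ x ∈ p ∧
        ∃ q, IsPath E q u v ∧ ∀ y ∈ q, ¬ T y := by
  intro p
  induction p with
  | nil => intro u w h _ _; exact absurd rfl h.1
  | cons a t ih =>
    intro u w h hw hu
    obtain ⟨_, hh, hl, hc⟩ := h
    have hau : a = u := by simpa using hh
    subst hau
    cases t with
    | nil =>
      have : a = w := by simpa using hl
      exact absurd (this ▸ hw) hu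
    | cons b t' =>
      have hab : E a b := (List.isChain_cons_cons.1 hc).1
      have hct : (b :: t').Chain' E := (List.isChain_cons_cons.1 hc).2
      have hl' : (b :: t').getLast? = some w := by
        rw [← hl, List.getLast?_cons_cons]
      by_cases hb : T b
      · exact ⟨a, b, hab, hb, hu, by simp, by simp,
          [a], ⟨by simp, by simp, by simp, List.isChain_singleton _⟩, by simpa using hu⟩
      · obtain ⟨v, x, hvx, hx, hv, hvp, hxp, q, hq, hqT⟩ :=
          ih b w ⟨by simp, rfl, hl', hct⟩ hw hb
        obtain ⟨hqne, hqh, hql, hqc⟩ := hq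
        refine ⟨v, x, hvx, hx, hv, List.mem_cons_of_mem _ hvp, List.mem_cons_of_mem _ hxp,
          a :: q, ⟨by simp, by simp, ?_, ?_⟩, ?_⟩
        · cases q with
          | nil => exact absurd rfl hqne
          | cons c q' => rw [List.getLast?_cons_cons]; exact hql
        · refine List.isChain_cons.2 ?_
          refine ⟨?_, hqc⟩
          intro y hy
          rw [hqh] at hy
          simp at hy
          exact hy ▸ hab
        · intro y hy
          rcases List.mem_cons.1 hy with rfl | hy'
          · exact hu
          · exact hqT y hy'

theorem statement10 {V : Type*} [Fintype V]
    (N : TwoUnicastNetwork V)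
    (P11 P22 : List V)
    (v1 v2 : V)
    (hP11 : IsPath N.E P11 N.s1 N.d1)
    (hP22 : IsPath N.E P22 N.s2 N.d2)
    (hdisj : P11.Disjoint P22)
    (hNoMan : ∀ R1 R2 : List V, IsPath N.E R1 N.s1 N.d1 → IsPath N.E R2 N.s2 N.d2 →
      R1.Disjoint R2 → ¬ Manageable N R1 R2)
    (hn1 : nInterf N Set.univ P11 N.s2 = 1)
    (hn1D : nDirect N P11 P22 N.s2 = 1)
    (hv2unique : {v | InterferesOn N Set.univ P11 N.s2 v} = {v2})
    (hv2P22 : v2 ∈ P22)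
    (hv1P11 : v1 ∈ P11)
    (hv2v1 : N.E v2 v1)
    (hedgeunique : ∀ u ∈ P22, ∀ w ∈ P11, N.E u w → u = v2 ∧ w = v1) :
    ∀ p : List V, IsPath N.E p N.s2 N.d1 → v2 ∈ p ∧ v1 ∈ p := by
  intro p hp
  have hs2 : N.s2 ∉ P11 := by
    intro hmem
    rcases pred_of_mem hP11.2.2.2 _ hmem with h | ⟨y, _, hy⟩
    · rw [hP11.2.1] at h
      exact N.s_ne (Option.some.inj h)
    · have h1 : N.layer N.s2 = 1 := (N.first_layer N.s2).2 (Or.inr rfl)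
      have h2 := N.edge_layer y N.s2 hy
      have h3 := N.layer_pos y
      omega
  have hd1P : N.d1 ∈ P11 := by
    have := hP11.2.2.1
    obtain ⟨h, h2⟩ := List.mem_getLast?_eq_getLast (l := P11) (by rw [this]; rfl)
    exact h2 ▸ List.getLast_mem h
  obtain ⟨v, x, hvx, hx, hv, hvp, hxp, q, hq, hqT⟩ :=
    first_hit (fun z => z ∈ P11) p N.s2 N.d1 hp hd1P hs2
  have hint : InterferesOn N Set.univ P11 N.s2 v :=
    ⟨trivial, hv, ⟨x, hx, trivial, hvx⟩, q, hq, fun _ _ => trivial, hqT⟩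
  have hveq : v = v2 := by
    have : v ∈ ({v2} : Set V) := by rw [← hv2unique]; exact hint
    simpa using this
  subst hveq
  have hx1 : x = v1 := (hedgeunique v hv2P22 x hx hvx).2
  exact ⟨hvp, hx1 ▸ hxp⟩
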